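/- For the standard G₂ structure on ℝ⁷, the identity Ψ_{ijkl} Ψ_{abcd} δ^{ld} = -Π_{ajk} Π_{ibc} - Π_{iak} Π_{jbc} - Π_{ija} Π_{kbc} + δ_{ia} δ_{jb} δ_{kc} + δ_{ib} δ_{jc} δ_{ka} + δ_{ic} δ_{ja} δ_{kb} - δ_{ia} δ_{jc} δ_{kb} - δ_{ib} δ_{ja} δ_{kc} - δ_{ic} δ_{jb} δ_{ka} - δ_{ia} Ψ_{jkbc} - δ_{ja} Ψ_{kibc} - δ_{ka} Ψ_{ijbc} + δ_{ab} Ψ_{ijkc} - δ_{ac} Ψ_{ijkb} holds for all i,j,k,a,b,c ∈ {1,...,7}. -/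

import Mathlib

open scoped BigOperators

noncomputable def kd {n : ℕ} (i j : Fin n) : ℝ := if i = j then 1 else 0

noncomputable def w3 {n : ℕ} (a b c i j k : Fin n) : ℝ :=
  Matrix.det !![kd a i, kd a j, kd a k; kd b i, kd b j, kd b k; kd c i, kd c j, kd c k]

noncomputable def w4 {n : ℕ} (a b c d i j k l : Fin n) : ℝ :=
  Matrix.det !![kd a i, kd a j, kd a k, kd a l; kd b i, kd b j, kd b k, kd b l;
                kd c i, kd c j, kd c k, kd c l; kd d i, kd d j, kd d k, kd d l]

/-- Components of the standard G₂ 3-form Π on ℝ⁷ (0-indexed coordinates). -/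
noncomputable def Pi7 (i j k : Fin 7) : ℝ :=
  w3 0 1 4 i j k + w3 0 2 5 i j k + w3 0 3 6 i j k - w3 1 2 6 i j k
    + w3 1 3 5 i j k - w3 2 3 4 i j k + w3 4 5 6 i j k

/-- Components of the standard G₂ 4-form Ψ = *Π on ℝ⁷. -/
noncomputable def Psi7 (i j k l : Fin 7) : ℝ :=
  w4 0 1 2 3 i j k l - w4 0 1 5 6 i j k l + w4 0 2 4 6 i j k l - w4 0 3 4 5 i j k l
    + w4 1 2 4 5 i j k l + w4 1 3 4 6 i j k l + w4 2 3 5 6 i j k l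



def kdZ {n : ℕ} (i j : Fin n) : ℤ := if i = j then 1 else 0

def w3Z {n : ℕ} (a b c i j k : Fin n) : ℤ :=
  kdZ a i * kdZ b j * kdZ c k - kdZ a i * kdZ b k * kdZ c j - kdZ a j * kdZ b i * kdZ c k
    + kdZ a j * kdZ b k * kdZ c i + kdZ a k * kdZ b i * kdZ c j - kdZ a k * kdZ b j * kdZ c i

def w4Z {n : ℕ} (a b c d i j k l : Fin n) : ℤ :=
  kdZ a i * w3Z b c d j k l - kdZ a j * w3Z b c d i k l + kdZ a k * w3Z b c d i j l
    - kdZ a l * w3Z b c d i j k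

def piZ (i j k : Fin 7) : ℤ :=
  w3Z 0 1 4 i j k + w3Z 0 2 5 i j k + w3Z 0 3 6 i j k - w3Z 1 2 6 i j k
    + w3Z 1 3 5 i j k - w3Z 2 3 4 i j k + w3Z 4 5 6 i j k

def psiZ (i j k l : Fin 7) : ℤ :=
  w4Z 0 1 2 3 i j k l - w4Z 0 1 5 6 i j k l + w4Z 0 2 4 6 i j k l - w4Z 0 3 4 5 i j k l
    + w4Z 1 2 4 5 i j k l + w4Z 1 3 4 6 i j k l + w4Z 2 3 5 6 i j k l

def PIN : ℕ := 612435164868159031798049000732897844171956452565868129723362027097130995244145958316679134330775585196811769933874332892259027833339139068427081891138633191783762814927050945424517775331314224282468352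

def PSIN : ℕ := 246463059382354889711305292147012035372540072852692779637677559003598821603789073432839229006523478382326232448815188980660187705645807644999479589730657853209469399824249746973844395359873626257222329770273941055626239825950127194471946025962168925099100929733163745815029959751031341824508201194209397759682056049003394254800404656329770227004072424579288572078457377894213155783828402195364034515279080411468518365799181408995191349877810825773662518961240667686463180832103406201490726330627896632823462707408293162189049187924489977689030354903046995621804442986621931670069691332951031214833578774319147798660580749507625251300583275978251851111102590986622831934622405481317757059421950866061322878330541090047821021337659698717477766433080990360555614563537571789134508599214127888322190568029068417604953008694254975457398402085426581095203226819968868085190840637376486994092874812376767157256061627663455361885797608340201227951691905682066521200308703764838567770067488574471142026606127242853447118833016154665656169540984531443269216650941282909822705302803536042504351059879814671908391064012867471923248417962747202655307982327467644325203552155254394500329108779618619456153649705337996203514851056623100698771686405695160725694538338751751987607877898014248652429760569329683364251159519803127405663997482259113542950714864229559498755306503438041159870071709984047557772996616650752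

def dec3 (m : ℕ) : ℤ := if m = 1 then 1 else if m = 2 then -1 else 0

def piT (i j k : Fin 7) : ℤ :=
  dec3 ((PIN >>> (2 * ((i.val * 7 + j.val) * 7 + k.val))) &&& 3)

def psiT (i j k l : Fin 7) : ℤ :=
  dec3 ((PSIN >>> (2 * (((i.val * 7 + j.val) * 7 + k.val) * 7 + l.val))) &&& 3)

lemma kd_cast {n : ℕ} (i j : Fin n) : kd i j = (kdZ i j : ℝ) := by
  unfold kd kdZ; split <;> simp

lemma w3_cast {n : ℕ} (a b c i j k : Fin n) : w3 a b c i j k = (w3Z a b c i j k : ℝ) := by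
  simp [w3, Matrix.det_fin_three, kd_cast, w3Z]

lemma w4_cast {n : ℕ} (a b c d i j k l : Fin n) :
    w4 a b c d i j k l = (w4Z a b c d i j k l : ℝ) := by
  simp [w4, Matrix.det_succ_row_zero, Fin.sum_univ_succ, kd_cast, w4Z, w3Z,
    show ((2:Fin 4).succAbove 2) = 3 by decide, show ((1:Fin 4).succAbove 2) = 3 by decide,
    show ((2:Fin 3).castSucc) = (2:Fin 4) by decide, show ((3:Fin 4).succAbove 2) = 2 by decide]
  ring

lemma pi_cast (i j k : Fin 7) : Pi7 i j k = (piZ i j k : ℝ) := by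
  simp only [Pi7, piZ, w3_cast]
  push_cast
  ring

lemma psi_cast0 (i j k l : Fin 7) : Psi7 i j k l = (psiZ i j k l : ℝ) := by
  simp only [Psi7, psiZ, w4_cast]
  push_cast
  ring

set_option maxHeartbeats 1000000 in
lemma piZ_eq : ∀ i j k : Fin 7, piZ i j k = piT i j k := by decide

set_option maxHeartbeats 1000000 in
lemma psiZ_eq : ∀ i j k l : Fin 7, psiZ i j k l = psiT i j k l := by decide

lemma pi_cast' (i j k : Fin 7) : Pi7 i j k = (piT i j k : ℝ) := by rw [pi_cast, piZ_eq]

lemma psi_cast' (i j k l : Fin 7) : Psi7 i j k l = (psiT i j k l : ℝ) := by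
  rw [psi_cast0, psiZ_eq]

/-- difference of the two sides, in ℤ, via lookup tables -/
def GZ (i j k a b c : Fin 7) : ℤ :=
  (psiT i j k 0 * psiT a b c 0 + psiT i j k 1 * psiT a b c 1 + psiT i j k 2 * psiT a b c 2
      + psiT i j k 3 * psiT a b c 3 + psiT i j k 4 * psiT a b c 4 + psiT i j k 5 * psiT a b c 5
      + psiT i j k 6 * psiT a b c 6)
    - (-(piT a j k * piT i b c) - piT i a k * piT j b c - piT i j a * piT k b c
        + kdZ i a * kdZ j b * kdZ k c + kdZ i b * kdZ j c * kdZ k a + kdZ i c * kdZ j a * kdZ k b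
        - kdZ i a * kdZ j c * kdZ k b - kdZ i b * kdZ j a * kdZ k c - kdZ i c * kdZ j b * kdZ k a
        - kdZ i a * psiT j k b c - kdZ j a * psiT k i b c - kdZ k a * psiT i j b c
        + kdZ a b * psiT i j k c - kdZ a c * psiT i j k b)

lemma piT_12 : ∀ x y z : Fin 7, piT x y z = -piT y x z := by decide
lemma piT_23 : ∀ x y z : Fin 7, piT x y z = -piT x z y := by decide
lemma psiT_12 : ∀ x y z w : Fin 7, psiT x y z w = -psiT y x z w := by decide
lemma psiT_23 : ∀ x y z w : Fin 7, psiT x y z w = -psiT x z y w := by decide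
lemma psiT_34 : ∀ x y z w : Fin 7, psiT x y z w = -psiT x y w z := by decide

lemma GZ_swap_ij (i j k a b c : Fin 7) : GZ j i k a b c = -GZ i j k a b c := by
  simp only [GZ, psiT_12 j i k, psiT_12 i k b, psiT_12 k j b, psiT_12 j i b,
    piT_12 a i k, piT_12 j a k, piT_12 j i a]
  ring

lemma GZ_swap_jk (i j k a b c : Fin 7) : GZ i k j a b c = -GZ i j k a b c := by
  simp only [GZ, psiT_23 i k j, psiT_12 k j b, psiT_12 j i b, psiT_12 i k b,
    piT_23 a k j, piT_23 i a j, piT_23 i k a]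
  ring

lemma GZ_swap_bc (i j k a b c : Fin 7) : GZ i j k a c b = -GZ i j k a b c := by
  simp only [GZ, psiT_23 a c b, psiT_34 j k c b, psiT_34 k i c b, psiT_34 i j c b,
    piT_23 i c b, piT_23 j c b, piT_23 k c b]
  ring

lemma GZ_ii (i k a b c : Fin 7) : GZ i i k a b c = 0 := by
  have h := GZ_swap_ij i i k a b c; linarith

lemma GZ_jj (i j a b c : Fin 7) : GZ i j j a b c = 0 := by
  have h := GZ_swap_jk i j j a b c; linarith

lemma GZ_bb (i j k a b : Fin 7) : GZ i j k a b b = 0 := by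
  have h := GZ_swap_bc i j k a b b; linarith

set_option maxHeartbeats 10000000 in
lemma key' : ∀ i j k a b c : Fin 7, i < j → j < k → b < c → GZ i j k a b c = 0 := by decide

lemma L1 (i j k : Fin 7) (hij : i < j) (hjk : j < k) (a b c : Fin 7) : GZ i j k a b c = 0 := by
  rcases lt_trichotomy b c with h | h | h
  · exact key' i j k a b c hij hjk h
  · subst h; exact GZ_bb i j k a b
  · have h1 := GZ_swap_bc i j k a c b
    have h2 := key' i j k a c b hij hjk h
    linarith

lemma L2 (i j : Fin 7) (hij : i < j) (k a b c : Fin 7) : GZ i j k a b c = 0 := by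
  rcases lt_trichotomy j k with h | h | h
  · exact L1 i j k hij h a b c
  · subst h; exact GZ_jj i j a b c
  · have hs := GZ_swap_jk i k j a b c
    rcases lt_trichotomy i k with h2 | h2 | h2
    · have := L1 i k j h2 h a b c; linarith
    · subst h2; have := GZ_ii i j a b c; linarith
    · have hs2 := GZ_swap_ij k i j a b c
      have := L1 k i j h2 hij a b c; linarith

lemma keyAll (i j k a b c : Fin 7) : GZ i j k a b c = 0 := by
  rcases lt_trichotomy i j with h | h | h
  · exact L2 i j h k a b c
  · subst h; exact GZ_ii i k a b c
  · have hs := GZ_swap_ij j i k a b c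
    have := L2 j i h k a b c; linarith

theorem stmt16 (i j k a b c : Fin 7) :
    ∑ l : Fin 7, ∑ d : Fin 7, Psi7 i j k l * Psi7 a b c d * kd l d
      = -(Pi7 a j k * Pi7 i b c) - Pi7 i a k * Pi7 j b c - Pi7 i j a * Pi7 k b c
        + kd i a * kd j b * kd k c + kd i b * kd j c * kd k a + kd i c * kd j a * kd k b
        - kd i a * kd j c * kd k b - kd i b * kd j a * kd k c - kd i c * kd j b * kd k a
        - kd i a * Psi7 j k b c - kd j a * Psi7 k i b c - kd k a * Psi7 i j b c
        + kd a b * Psi7 i j k c - kd a c * Psi7 i j k b := by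
  have h : ∀ l : Fin 7, ∑ d : Fin 7, Psi7 i j k l * Psi7 a b c d * kd l d
      = Psi7 i j k l * Psi7 a b c l := by
    intro l
    simp [kd, mul_ite, mul_one, mul_zero, Finset.sum_ite_eq]
  rw [Finset.sum_congr rfl fun l _ => h l, Fin.sum_univ_seven]
  simp only [psi_cast', pi_cast', kd_cast]
  have hG := keyAll i j k a b c
  simp only [GZ] at hG
  have hEq := sub_eq_zero.mp hG
  exact_mod_cast hEq
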